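/- For all natural numbers n, the sum over k from 0 to n of (1 - (n - 2k)*H_k) / C(n,k) equals (n+1) * H_{n+1}. -/

import Mathlib

open Finset

def harmonicQ (m : Nat) : ℚ := ∑ j ∈ Finset.range m, (1 : ℚ) / (j + 1)

lemma harmonicQ_succ (m : ℕ) : harmonicQ (m+1) = harmonicQ m + 1/(m+1) := by
  simp [harmonicQ, Finset.sum_range_succ]

lemma step (n k : ℕ) (hk : k < n) :
    (1 - ((n : ℚ) - 2 * k) * harmonicQ k) / (n.choose k : ℚ)
      = ((n : ℚ) + 1 - (k+1)) * harmonicQ (k+1) / (n.choose (k+1) : ℚ)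
        - ((n : ℚ) + 1 - k) * harmonicQ k / (n.choose k : ℚ) := by
  have hc1 : (n.choose k : ℚ) ≠ 0 := by
    exact_mod_cast (Nat.choose_pos hk.le).ne'
  have hk1 : ((k : ℚ) + 1) ≠ 0 := by positivity
  have hnk : ((n : ℚ) - k) ≠ 0 := by
    have : (k : ℚ) < n := by exact_mod_cast hk
    linarith
  have hc2 : (n.choose (k+1) : ℚ) = (n.choose k : ℚ) * ((n : ℚ) - k) / ((k : ℚ) + 1) := by
    have h := Nat.choose_succ_right_eq n k
    have h' : ((n.choose (k+1) * (k+1) : ℕ) : ℚ) = ((n.choose k * (n - k) : ℕ) : ℚ) := by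
      exact_mod_cast congrArg (Nat.cast (R := ℚ)) h
    push_cast [Nat.cast_sub hk.le] at h'
    field_simp
    linarith [h']
  rw [hc2, harmonicQ_succ]
  field_simp
  ring

theorem stmt18 (n : ℕ) :
    ∑ k ∈ range (n + 1), (1 - ((n : ℚ) - 2 * k) * harmonicQ k) / (n.choose k : ℚ)
      = ((n : ℚ) + 1) * harmonicQ (n + 1) := by
  rw [Finset.sum_range_succ]
  have htel : ∑ k ∈ range n, (1 - ((n : ℚ) - 2 * k) * harmonicQ k) / (n.choose k : ℚ)
      = ((n : ℚ) + 1 - n) * harmonicQ n / (n.choose n : ℚ)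
        - ((n : ℚ) + 1 - 0) * harmonicQ 0 / (n.choose 0 : ℚ) := by
    rw [Finset.sum_congr rfl (fun k hk => step n k (Finset.mem_range.mp hk))]
    have := Finset.sum_range_sub (fun k => ((n : ℚ) + 1 - k) * harmonicQ k / (n.choose k : ℚ)) n
    simpa using this
  rw [htel]
  simp only [Nat.choose_self, Nat.choose_zero_right, Nat.cast_one, harmonicQ_succ]
  simp [harmonicQ]
  have h : ((n:ℚ)+1) ≠ 0 := by positivity
  field_simp
  ring
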